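/- Let k ≥ 4 be even and m ≥ 0, and set b(θ) = kθ/2 − 2πm·cos(θ). If α, β ∈ (π/2, 2π/3) are two consecutive zeros of cos(b(θ)) with α < β, then β − α ≤ 2π/(k + 2√3·πm). -/

import Mathlib

open Real Set

theorem stmt3 (k m : ℤ) (hk : 4 ≤ k) (hke : Even k) (hm : 0 ≤ m)
    (b : ℝ → ℝ)
    (hb : ∀ θ, b θ = (k : ℝ) * θ / 2 - 2 * π * (m : ℝ) * Real.cos θ)
    (α β : ℝ) (hα : α ∈ Set.Ioo (π / 2) (2 * π / 3)) (hβ : β ∈ Set.Ioo (π / 2) (2 * π / 3))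
    (hαβ : α < β)
    (hzα : Real.cos (b α) = 0) (hzβ : Real.cos (b β) = 0)
    (hcons : ∀ θ ∈ Set.Ioo α β, Real.cos (b θ) ≠ 0) :
    β - α ≤ 2 * π / ((k : ℝ) + 2 * Real.sqrt 3 * (m : ℝ) * π) := by
  have hbfun : b = fun θ => (k : ℝ) * θ / 2 - 2 * π * (m : ℝ) * Real.cos θ := funext hb
  have hm' : (0:ℝ) ≤ (m:ℝ) := by exact_mod_cast hm
  have hk' : (4:ℝ) ≤ (k:ℝ) := by exact_mod_cast hk
  have hπ := Real.pi_pos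
  obtain ⟨c, hc⟩ : ∃ c : ℝ, c = (k:ℝ)/2 + Real.sqrt 3 * π * m := ⟨_, rfl⟩
  have hsqrt3 : (0:ℝ) < Real.sqrt 3 := Real.sqrt_pos.2 (by norm_num)
  have hX : (0:ℝ) ≤ Real.sqrt 3 * π * m := by positivity
  have hcpos : 0 < c := by rw [hc]; linarith
  -- derivative
  have hd : ∀ θ, HasDerivAt b ((k:ℝ)/2 + 2*π*(m:ℝ)*Real.sin θ) θ := by
    intro θ
    rw [hbfun]
    have h1 : HasDerivAt (fun θ : ℝ => (k:ℝ) * θ / 2) ((k:ℝ)/2) θ := by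
      simpa using ((hasDerivAt_id θ).const_mul ((k:ℝ))).div_const 2
    have h2 : HasDerivAt (fun θ : ℝ => 2*π*(m:ℝ)*Real.cos θ) (2*π*(m:ℝ)*(-Real.sin θ)) θ :=
      (Real.hasDerivAt_cos θ).const_mul (2*π*(m:ℝ))
    have := h1.sub h2
    refine this.congr_deriv ?_
    ring
  have hcont : Continuous b := by
    rw [hbfun]; continuity
  -- sin lower bound on [α, β]
  have hsin : ∀ θ ∈ Set.Icc α β, Real.sqrt 3 / 2 ≤ Real.sin θ := by
    intro θ hθ
    have h1 : π/2 < θ := lt_of_lt_of_le hα.1 hθ.1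
    have h2 : θ < 2*π/3 := lt_of_le_of_lt hθ.2 hβ.2
    have hs : Real.sin θ = Real.cos (θ - π/2) := by
      rw [← Real.cos_pi_div_two_sub, ← Real.cos_neg]; ring_nf
    rw [hs, ← Real.cos_pi_div_six]
    apply Real.cos_le_cos_of_nonneg_of_le_pi
    · linarith
    · linarith
    · linarith
  -- MVT lower bound: c * (β - α) ≤ b β - b α
  have hmvt : c * (β - α) ≤ b β - b α := by
    refine Convex.mul_sub_le_image_sub_of_le_deriv (convex_Icc α β)
      hcont.continuousOn (fun x _ => (hd x).differentiableAt.differentiableWithinAt)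
      ?_ α (Set.left_mem_Icc.2 hαβ.le) β (Set.right_mem_Icc.2 hαβ.le) hαβ.le
    intro x hx
    rw [interior_Icc] at hx
    rw [(hd x).deriv]
    have hsx := hsin x ⟨hx.1.le, hx.2.le⟩
    have h2 : Real.sqrt 3 * π * m ≤ 2*π*(m:ℝ)*Real.sin x := by
      nlinarith [mul_le_mul_of_nonneg_left hsx (by positivity : (0:ℝ) ≤ 2*π*(m:ℝ))]
    rw [hc]; linarith
  -- Upper bound: b β - b α ≤ π
  have hub : b β - b α ≤ π := by
    by_contra h
    push_neg at h
    have hmem : b α + π ∈ Set.Ioo (b α) (b β) := ⟨by linarith, by linarith⟩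
    obtain ⟨θ, hθ, hbθ⟩ := intermediate_value_Ioo hαβ.le hcont.continuousOn hmem
    apply hcons θ hθ
    rw [hbθ, Real.cos_add_pi, hzα, neg_zero]
  -- conclude
  have hdpos : 0 < (k : ℝ) + 2 * Real.sqrt 3 * (m : ℝ) * π := by
    nlinarith [mul_nonneg (mul_nonneg hsqrt3.le hm') hπ.le]
  rw [le_div_iff₀ hdpos]
  have h2 : c * (β - α) ≤ π := le_trans hmvt hub
  rw [hc] at h2
  nlinarith [h2]
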